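/- arXiv:2206.00537 — 4 statements merged into one kernel-verified Lean document; each statement's English description precedes it below -/
import Mathlib

section
/- Let (X, M, μ) and (Ω, B, P) be probability spaces and ξ : X × Ω → ℝ jointly measurable with ξ(x,·) integrable and x ↦ ξ(x,ω) integrable, defining ξ[X](ω) = ∫_X ξ(x, ω) μ(dx). Let q > 1 and suppose sup_{x ∈ X} P(|ξ(x)| ≥ t) ≤ t^{−q} for all t ≥ 1. Then there exists a constant C = C(q) < ∞, depending only on q, such that P(|ξ[X]| ≥ t) ≤ C t^{−q} for all t ≥ 1. -/
open MeasureTheory Real ENNReal Set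

/-- Proposition 2.2: if a jointly measurable random field `ξ` satisfies the uniform
power tail estimate `P(|ξ(x)| ≥ t) ≤ t^{-q}` for `t ≥ 1`, with `q > 1`, then the
spatial average `ξ[X](ω) = ∫_X ξ(x,ω) μ(dx)` satisfies
`P(|ξ[X]| ≥ t) ≤ C t^{-q}` for `t ≥ 1`, with a constant `C = C(q)` depending only on `q`. -/
theorem tail_of_spatial_average_power_tail
    (q : ℝ) (hq : 1 < q) :
    ∃ C : ℝ, 0 < C ∧
      ∀ (X Ω : Type) [MeasurableSpace X] [MeasurableSpace Ω]
        (μ : Measure X) (P : Measure Ω),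
        IsProbabilityMeasure μ → IsProbabilityMeasure P →
        ∀ (ξ : X → Ω → ℝ),
          (Measurable fun z : X × Ω => ξ z.1 z.2) →
          (∀ x, Integrable (ξ x) P) →
          (∀ ω, Integrable (fun x => ξ x ω) μ) →
          (∀ x, ∀ t : ℝ, 1 ≤ t → P {ω | t ≤ |ξ x ω|} ≤ ENNReal.ofReal (t ^ (-q))) →
          ∀ t : ℝ, 1 ≤ t →
            P {ω | t ≤ |∫ x, ξ x ω ∂μ|} ≤ ENNReal.ofReal (C * t ^ (-q)) := by
  have hq1 : 0 < q - 1 := by linarith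
  have hq0 : 0 < q := by linarith
  refine ⟨2 ^ q * (q / (q - 1)), by positivity, ?_⟩
  intro X Ω _ _ μ P hμ hP ξ hmeas hint1 hint2 htail t ht
  have ht0 : 0 < t := by linarith
  by_cases hts : t < 2
  · -- trivial case `1 ≤ t < 2`
    refine le_trans prob_le_one (ENNReal.one_le_ofReal.mpr ?_)
    have h1 : (2:ℝ) ^ (-q) ≤ t ^ (-q) :=
      Real.rpow_le_rpow_of_nonpos ht0 hts.le (by linarith)
    have h2 : (1:ℝ) ≤ q / (q - 1) := by
      rw [le_div_iff₀ hq1]; linarith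
    calc (1:ℝ) = 2 ^ q * 1 * 2 ^ (-q) := by
          rw [mul_one, ← Real.rpow_add (by norm_num)]; simp
      _ ≤ 2 ^ q * (q / (q - 1)) * t ^ (-q) := by
          apply mul_le_mul _ h1 (by positivity) (by positivity)
          exact mul_le_mul_of_nonneg_left h2 (by positivity)
  · -- main case `t ≥ 2`
    push_neg at hts
    set s : ℝ := t / 2 with hsdef
    have hs1 : (1:ℝ) ≤ s := by rw [hsdef]; linarith
    have hs0 : (0:ℝ) < s := by linarith
    -- truncated field
    set h : X → Ω → ℝ := fun x ω => if s < |ξ x ω| then |ξ x ω| else 0 with hhdef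
    have hh_nn : ∀ x ω, 0 ≤ h x ω := by
      intro x ω; simp only [hhdef]; split
      · positivity
      · exact le_refl _
    have hh_le : ∀ x ω, h x ω ≤ |ξ x ω| := by
      intro x ω; simp only [hhdef]; split
      · exact le_refl _
      · positivity
    set F : X → Ω → ℝ≥0∞ := fun x ω => ENNReal.ofReal (h x ω) with hFdef
    -- measurability
    have hSet : MeasurableSet {z : X × Ω | s < |ξ z.1 z.2|} :=
      measurableSet_lt measurable_const hmeas.abs
    have hhmeas : Measurable fun z : X × Ω => h z.1 z.2 := by
      exact Measurable.ite hSet hmeas.abs measurable_const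
    have hFmeas : Measurable fun z : X × Ω => F z.1 z.2 :=
      ENNReal.measurable_ofReal.comp hhmeas
    have hξx : ∀ ω, Measurable fun x => ξ x ω := fun ω =>
      hmeas.comp (measurable_id.prodMk measurable_const)
    have hξω : ∀ x, Measurable fun ω => ξ x ω := fun x =>
      hmeas.comp (measurable_const.prodMk measurable_id)
    have hhx : ∀ ω, Measurable fun x => h x ω := fun ω =>
      hhmeas.comp (measurable_id.prodMk measurable_const)
    have hhω : ∀ x, Measurable fun ω => h x ω := fun x =>
      hhmeas.comp (measurable_const.prodMk measurable_id)
    -- Step A: inclusion of events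
    have hsub : {ω | t ≤ |∫ x, ξ x ω ∂μ|} ⊆
        {ω | ENNReal.ofReal s ≤ ∫⁻ x, F x ω ∂μ} := by
      intro ω hω
      simp only [Set.mem_setOf_eq] at hω ⊢
      have hinth : Integrable (fun x => h x ω) μ := by
        refine Integrable.mono (hint2 ω).abs (hhx ω).aestronglyMeasurable ?_
        filter_upwards with x
        rw [Real.norm_eq_abs, abs_of_nonneg (hh_nn x ω), Real.norm_eq_abs, abs_abs]
        exact hh_le x ω
      have key : s ≤ ∫ x, h x ω ∂μ := by
        have h1 : |∫ x, ξ x ω ∂μ| ≤ ∫ x, |ξ x ω| ∂μ := by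
          simpa [Real.norm_eq_abs] using
            norm_integral_le_integral_norm (μ := μ) (fun x => ξ x ω)
        have h2 : ∫ x, |ξ x ω| ∂μ ≤ ∫ x, (s + h x ω) ∂μ := by
          refine integral_mono (hint2 ω).abs ((integrable_const s).add hinth) ?_
          intro x
          simp only [hhdef]
          split
          · linarith
          · push_neg at *; linarith
        rw [integral_add (integrable_const s) hinth, integral_const] at h2
        simp only [measure_univ, probReal_univ, ENNReal.toReal_one, smul_eq_mul, one_mul] at h2
        have := le_trans hω (le_trans h1 h2)
        have hts' : t = s + s := by rw [hsdef]; ring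
        linarith
      calc ENNReal.ofReal s ≤ ENNReal.ofReal (∫ x, h x ω ∂μ) :=
            ENNReal.ofReal_le_ofReal key
        _ = ∫⁻ x, F x ω ∂μ :=
            ofReal_integral_eq_lintegral_ofReal hinth
              (Filter.Eventually.of_forall fun x => hh_nn x ω)
    -- Step B: Markov
    have hg : Measurable fun ω => ∫⁻ x, F x ω ∂μ :=
      Measurable.lintegral_prod_left hFmeas
    have hMarkov : P {ω | ENNReal.ofReal s ≤ ∫⁻ x, F x ω ∂μ} ≤
        (∫⁻ ω, ∫⁻ x, F x ω ∂μ ∂P) / ENNReal.ofReal s :=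
      meas_ge_le_lintegral_div hg.aemeasurable
        (by simp [ENNReal.ofReal_eq_zero]; linarith) ENNReal.ofReal_ne_top
    -- Step C: Tonelli
    have hswap : ∫⁻ ω, ∫⁻ x, F x ω ∂μ ∂P = ∫⁻ x, ∫⁻ ω, F x ω ∂P ∂μ :=
      (lintegral_lintegral_swap hFmeas.aemeasurable).symm
    -- Step D: inner bound for each x
    have hinner : ∀ x, ∫⁻ ω, F x ω ∂P ≤
        ENNReal.ofReal (q / (q - 1) * s ^ (1 - q)) := by
      intro x
      rw [hFdef]
      rw [lintegral_eq_lintegral_meas_le P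
        (Filter.Eventually.of_forall fun ω => hh_nn x ω) (hhω x).aemeasurable]
      have hb : ∀ u ∈ Ioi (0:ℝ), P {ω | u ≤ h x ω} ≤
          ENNReal.ofReal ((max u s) ^ (-q)) := by
        intro u hu
        have hsub2 : {ω | u ≤ h x ω} ⊆ {ω | max u s ≤ |ξ x ω|} := by
          intro ω hω
          simp only [Set.mem_setOf_eq, hhdef] at hω ⊢
          by_cases hc : s < |ξ x ω|
          · rw [if_pos hc] at hω
            exact max_le hω hc.le
          · rw [if_neg hc] at hω
            exact absurd hω (not_le.mpr hu)
        exact le_trans (measure_mono hsub2)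
          (htail x (max u s) (le_trans hs1 (le_max_right u s)))
      calc ∫⁻ u in Ioi (0:ℝ), P {ω | u ≤ h x ω}
          ≤ ∫⁻ u in Ioi (0:ℝ), ENNReal.ofReal ((max u s) ^ (-q)) := by
            refine setLIntegral_mono' measurableSet_Ioi hb
        _ = (∫⁻ u in Ioc (0:ℝ) s, ENNReal.ofReal ((max u s) ^ (-q))) +
            ∫⁻ u in Ioi s, ENNReal.ofReal ((max u s) ^ (-q)) := by
            rw [← lintegral_union measurableSet_Ioi Ioc_disjoint_Ioi_same,
              Ioc_union_Ioi_eq_Ioi hs0.le]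
        _ ≤ ENNReal.ofReal (s ^ (1 - q)) +
            ENNReal.ofReal (s ^ (1 - q) / (q - 1)) := by
            gcongr
            · refine le_of_eq ?_
              calc ∫⁻ u in Ioc (0:ℝ) s, ENNReal.ofReal ((max u s) ^ (-q))
                  = ∫⁻ _ in Ioc (0:ℝ) s, ENNReal.ofReal (s ^ (-q)) := by
                    refine setLIntegral_congr_fun measurableSet_Ioc ?_
                    intro u hu; dsimp only
                    rw [max_eq_right hu.2]
                _ = ENNReal.ofReal (s ^ (-q)) * ENNReal.ofReal s := by
                    rw [lintegral_const, Measure.restrict_apply MeasurableSet.univ,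
                      Set.univ_inter, Real.volume_Ioc, sub_zero]
                _ = ENNReal.ofReal (s ^ (1 - q)) := by
                    rw [← ENNReal.ofReal_mul (by positivity)]
                    congr 1
                    rw [show (1 - q) = -q + 1 by ring, Real.rpow_add hs0,
                      Real.rpow_one]
            · refine le_of_eq ?_
              calc ∫⁻ u in Ioi s, ENNReal.ofReal ((max u s) ^ (-q))
                    = ∫⁻ u in Ioi s, ENNReal.ofReal (u ^ (-q)) := by
                      refine setLIntegral_congr_fun measurableSet_Ioi ?_
                      intro u hu; dsimp only
                      rw [max_eq_left (le_of_lt hu)]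
                  _ = ENNReal.ofReal (∫ u in Ioi s, u ^ (-q)) := by
                      refine (ofReal_integral_eq_lintegral_ofReal ?_ ?_).symm
                      · exact integrableOn_Ioi_rpow_of_lt (by linarith) hs0
                      · filter_upwards [ae_restrict_mem measurableSet_Ioi] with u hu
                        have : (0:ℝ) < u := lt_trans hs0 hu
                        positivity
                  _ = ENNReal.ofReal (s ^ (1 - q) / (q - 1)) := by
                      rw [integral_Ioi_rpow_of_lt (by linarith) hs0]
                      congr 1
                      rw [neg_div, ← div_neg]
                      ring_nf
        _ = ENNReal.ofReal (q / (q - 1) * s ^ (1 - q)) := by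
            rw [← ENNReal.ofReal_add (by positivity) (by positivity)]
            congr 1
            field_simp
            ring
    -- put everything together
    calc P {ω | t ≤ |∫ x, ξ x ω ∂μ|}
        ≤ P {ω | ENNReal.ofReal s ≤ ∫⁻ x, F x ω ∂μ} := measure_mono hsub
      _ ≤ (∫⁻ ω, ∫⁻ x, F x ω ∂μ ∂P) / ENNReal.ofReal s := hMarkov
      _ ≤ ENNReal.ofReal (q / (q - 1) * s ^ (1 - q)) / ENNReal.ofReal s := by
          gcongr
          rw [hswap]
          calc ∫⁻ x, ∫⁻ ω, F x ω ∂P ∂μ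
              ≤ ∫⁻ _, ENNReal.ofReal (q / (q - 1) * s ^ (1 - q)) ∂μ :=
                lintegral_mono hinner
            _ = ENNReal.ofReal (q / (q - 1) * s ^ (1 - q)) := by
                simp [lintegral_const]
      _ = ENNReal.ofReal (2 ^ q * (q / (q - 1)) * t ^ (-q)) := by
          rw [← ENNReal.ofReal_div_of_pos hs0]
          congr 1
          rw [mul_div_assoc]
          have hsq : s ^ (1 - q) / s = s ^ (-q) := by
            rw [div_eq_mul_inv, ← Real.rpow_neg_one s, ← Real.rpow_add hs0]
            ring_nf
          rw [hsq, hsdef, Real.div_rpow ht0.le (by norm_num),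
            Real.rpow_neg (by norm_num : (0:ℝ) ≤ 2)]
          field_simp
end

section
/- Let b ∈ (1, ∞], let ψ : (1, b) → (0, ∞) be measurable with inf_{p∈(1,b)} ψ(p) > 0, and let τ be a real random variable with ‖τ‖_{L^p(P)} ≤ ψ(p) for every p ∈ (1, b) (i.e. ‖τ‖Gψ ≤ 1). Then for every t ≥ e, P(|τ| ≥ t) ≤ exp(−h*(ln t)), where h(p) = p ln ψ(p) and h*(u) = sup_{p∈(1,b)} (p u − h(p)). -/
open MeasureTheory Real ENNReal

/-- Tail estimate for random variables with unit Grand Lebesgue norm: if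
`‖τ‖_{L^p(P)} ≤ ψ(p)` for all `p ∈ (1,b)` (i.e. `‖τ‖Gψ ≤ 1`), where
`ψ : (1,b) → (0,∞)` is measurable with `inf ψ > 0`, then for every `t ≥ e`
`P(|τ| ≥ t) ≤ exp(−h*(ln t))`, where `h(p) = p ln ψ(p)` and
`h*(u) = sup_{p ∈ (1,b)} (p u − h(p))` is the Young–Fenchel transform. -/
theorem grand_lebesgue_tail_estimate
    {Ω : Type*} [MeasurableSpace Ω] (P : Measure Ω) [IsProbabilityMeasure P]
    (b : ℝ≥0∞) (hb : 1 < b)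
    (ψ : ℝ → ℝ) (hψmeas : Measurable ψ)
    (hψpos : ∃ c : ℝ, 0 < c ∧ ∀ p : ℝ, 1 < p → ENNReal.ofReal p < b → c ≤ ψ p)
    (τ : Ω → ℝ) (hτ : Measurable τ)
    (hnorm : ∀ p : ℝ, 1 < p → ENNReal.ofReal p < b →
      eLpNorm τ (ENNReal.ofReal p) P ≤ ENNReal.ofReal (ψ p)) :
    ∀ t : ℝ, Real.exp 1 ≤ t →
      P {ω | t ≤ |τ ω|} ≤ ENNReal.ofReal
        (Real.exp
          (- sSup {y : ℝ | ∃ p : ℝ, 1 < p ∧ ENNReal.ofReal p < b ∧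
              y = p * Real.log t - p * Real.log (ψ p)})) := by
  intro t ht
  obtain ⟨c, hc, hcψ⟩ := hψpos
  have ht0 : (0:ℝ) < t := lt_of_lt_of_le (Real.exp_pos 1) ht
  set S : Set ℝ := {y : ℝ | ∃ p : ℝ, 1 < p ∧ ENNReal.ofReal p < b ∧
      y = p * Real.log t - p * Real.log (ψ p)} with hS
  -- Chebyshev for each admissible p
  have key : ∀ y ∈ S, P {ω | t ≤ |τ ω|} ≤ ENNReal.ofReal (Real.exp (-y)) := by
    rintro y ⟨p, hp1, hpb, rfl⟩
    have hp0 : (0:ℝ) < p := lt_trans one_pos hp1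
    have hψp : (0:ℝ) < ψ p := lt_of_lt_of_le hc (hcψ p hp1 hpb)
    have hpne : ENNReal.ofReal p ≠ 0 := by
      simp [ENNReal.ofReal_eq_zero, not_le, hp0]
    have hptop : ENNReal.ofReal p ≠ ∞ := ENNReal.ofReal_ne_top
    have htε : (ENNReal.ofReal t) ≠ 0 := by
      simp [ENNReal.ofReal_eq_zero, not_le, ht0]
    have hset : {ω | t ≤ |τ ω|} = {ω | ENNReal.ofReal t ≤ (‖τ ω‖₊ : ℝ≥0∞)} := by
      ext ω
      simp only [Set.mem_setOf_eq, ← enorm_eq_nnnorm, ← ofReal_norm,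
        Real.norm_eq_abs]
      exact (ENNReal.ofReal_le_ofReal_iff (abs_nonneg _)).symm
    have hcheb := meas_ge_le_mul_pow_eLpNorm_enorm (μ := P) hpne hptop
      (hτ.aestronglyMeasurable) htε (fun h => absurd h ENNReal.ofReal_ne_top)
    rw [hset]
    refine le_trans hcheb ?_
    have htor : (ENNReal.ofReal p).toReal = p := ENNReal.toReal_ofReal hp0.le
    rw [htor]
    calc (ENNReal.ofReal t)⁻¹ ^ p * eLpNorm τ (ENNReal.ofReal p) P ^ p
        ≤ (ENNReal.ofReal t)⁻¹ ^ p * (ENNReal.ofReal (ψ p)) ^ p := by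
          gcongr
          · exact hnorm p hp1 hpb
      _ = ENNReal.ofReal (t⁻¹ ^ p) * ENNReal.ofReal (ψ p ^ p) := by
          rw [← ENNReal.ofReal_inv_of_pos ht0,
            ENNReal.ofReal_rpow_of_pos (inv_pos.2 ht0),
            ENNReal.ofReal_rpow_of_pos hψp]
      _ = ENNReal.ofReal (t⁻¹ ^ p * ψ p ^ p) := by
          rw [← ENNReal.ofReal_mul (Real.rpow_nonneg (inv_nonneg.2 ht0.le) p)]
      _ = ENNReal.ofReal (Real.exp (-(p * Real.log t - p * Real.log (ψ p)))) := by
          congr 1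
          rw [Real.rpow_def_of_pos (inv_pos.2 ht0), Real.rpow_def_of_pos hψp,
            ← Real.exp_add, Real.log_inv]
          ring_nf
  by_cases hSne : S.Nonempty
  · by_cases hP0 : P {ω | t ≤ |τ ω|} = 0
    · rw [hP0]; exact zero_le
    · have hPfin : P {ω | t ≤ |τ ω|} ≠ ∞ := measure_ne_top P _
      have hPpos : 0 < (P {ω | t ≤ |τ ω|}).toReal :=
        ENNReal.toReal_pos hP0 hPfin
      have hbdd : ∀ y ∈ S, y ≤ -Real.log (P {ω | t ≤ |τ ω|}).toReal := by
        intro y hy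
        have h1 := key y hy
        have h2 : (P {ω | t ≤ |τ ω|}).toReal ≤ Real.exp (-y) := by
          have := ENNReal.toReal_mono (by simp) h1
          rwa [ENNReal.toReal_ofReal (Real.exp_pos _).le] at this
        have h3 := Real.log_le_log hPpos h2
        rw [Real.log_exp] at h3
        linarith
      have hsup : sSup S ≤ -Real.log (P {ω | t ≤ |τ ω|}).toReal :=
        csSup_le hSne hbdd
      have : (P {ω | t ≤ |τ ω|}).toReal ≤ Real.exp (-sSup S) := by
        calc (P {ω | t ≤ |τ ω|}).toReal
            = Real.exp (Real.log (P {ω | t ≤ |τ ω|}).toReal) :=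
              (Real.exp_log hPpos).symm
          _ ≤ Real.exp (-sSup S) := Real.exp_le_exp.2 (by linarith)
      calc P {ω | t ≤ |τ ω|} = ENNReal.ofReal (P {ω | t ≤ |τ ω|}).toReal :=
            (ENNReal.ofReal_toReal hPfin).symm
        _ ≤ ENNReal.ofReal (Real.exp (-sSup S)) :=
            ENNReal.ofReal_le_ofReal this
  · have : S = ∅ := Set.not_nonempty_iff_eq_empty.1 hSne
    rw [this, Real.sSup_empty]
    simp only [neg_zero, Real.exp_zero, ENNReal.ofReal_one]
    exact prob_le_one
end

section
/- (Theorem 2.1.) Let (X, M, μ) and (Ω, B, P) be probability spaces, let ξ : X × Ω → ℝ be jointly measurable with spatial average ξ[X](ω) = ∫_X ξ(x, ω) μ(dx). Define Q(t) = sup_{x∈X} P(|ξ(x)| ≥ t) for t ≥ 0, g₀(p) = (p ∫₀^∞ t^{p−1} Q(t) dt)^{1/p}, and g(p) = p ln g₀(p). Suppose there exists b ∈ (1, ∞] such that g₀(p) < ∞ for all p ∈ (1, b). Then for all t ≥ e: P(|ξ[X]| ≥ t) ≤ exp(−g*(ln t)), where g*(u) = sup_{p∈(1,b)} (p u − g(p)).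 -/
open MeasureTheory Real ENNReal

/-- Theorem 2.1: let `ξ` be a jointly measurable random field with uniform tail
`Q(t) = sup_x P(|ξ(x)| ≥ t)`, let `g₀(p) = (p ∫₀^∞ t^{p−1} Q(t) dt)^{1/p}` and
`g(p) = p ln g₀(p)`, and suppose `g₀(p) < ∞` for all `p ∈ (1,b)` for some
`b ∈ (1,∞]`. Then the spatial average `ξ[X](ω) = ∫_X ξ(x,ω) μ(dx)` satisfies
`P(|ξ[X]| ≥ t) ≤ exp(−g*(ln t))` for all `t ≥ e`, where
`g*(u) = sup_{p∈(1,b)} (pu − g(p))`. -/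
theorem tail_of_spatial_average_via_GLS
    {X Ω : Type*} [MeasurableSpace X] [MeasurableSpace Ω]
    (μ : Measure X) (P : Measure Ω)
    [IsProbabilityMeasure μ] [IsProbabilityMeasure P]
    (ξ : X → Ω → ℝ)
    (hmeas : Measurable fun z : X × Ω => ξ z.1 z.2)
    (Q : ℝ → ℝ≥0∞)
    (hQ : ∀ t : ℝ, Q t = ⨆ x : X, P {ω | t ≤ |ξ x ω|})
    (g₀ : ℝ → ℝ≥0∞)
    (hg₀ : ∀ p : ℝ, g₀ p =
      (ENNReal.ofReal p *
        ∫⁻ t in Set.Ioi (0 : ℝ), ENNReal.ofReal (t ^ (p - 1)) * Q t) ^ (1 / p))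
    (g : ℝ → ℝ)
    (hg : ∀ p : ℝ, g p = p * Real.log (g₀ p).toReal)
    (b : ℝ≥0∞) (hb : 1 < b)
    (hfin : ∀ p : ℝ, 1 < p → ENNReal.ofReal p < b → g₀ p < ⊤) :
    ∀ t : ℝ, Real.exp 1 ≤ t →
      P {ω | t ≤ |∫ x, ξ x ω ∂μ|} ≤ ENNReal.ofReal
        (Real.exp
          (- sSup {y : ℝ | ∃ p : ℝ, 1 < p ∧ ENNReal.ofReal p < b ∧
              y = p * Real.log t - g p})) := by
  intro t ht
  have ht1 : (1 : ℝ) < t := by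
    have := Real.exp_one_gt_d9
    linarith
  have ht0 : (0 : ℝ) < t := lt_trans one_pos ht1
  set A : Set Ω := {ω | t ≤ |∫ x, ξ x ω ∂μ|} with hA
  set S : Set ℝ := {y : ℝ | ∃ p : ℝ, 1 < p ∧ ENNReal.ofReal p < b ∧
      y = p * Real.log t - g p} with hS
  -- key per-exponent bound
  have key : ∀ p : ℝ, 1 < p → ENNReal.ofReal p < b →
      P A ≤ ENNReal.ofReal (Real.exp (-(p * Real.log t - g p))) := by
    intro p hp1 hpb
    have hp0 : (0 : ℝ) < p := lt_trans one_pos hp1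
    set C : ℝ≥0∞ :=
      ENNReal.ofReal p *
        ∫⁻ s in Set.Ioi (0 : ℝ), ENNReal.ofReal (s ^ (p - 1)) * Q s with hC
    -- pointwise: |∫ ξ| ≤ ∫⁻ |ξ|
    have hstepA : ∀ ω : Ω,
        ENNReal.ofReal |∫ x, ξ x ω ∂μ| ≤ ∫⁻ x, ENNReal.ofReal |ξ x ω| ∂μ := by
      intro ω
      by_cases hint : Integrable (fun x => ξ x ω) μ
      · calc ENNReal.ofReal |∫ x, ξ x ω ∂μ|
            ≤ ENNReal.ofReal (∫ x, |ξ x ω| ∂μ) := by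
              apply ENNReal.ofReal_le_ofReal
              simpa [Real.norm_eq_abs] using
                norm_integral_le_integral_norm (μ := μ) (fun x => ξ x ω)
          _ = ∫⁻ x, ENNReal.ofReal |ξ x ω| ∂μ := by
              exact ofReal_integral_eq_lintegral_ofReal hint.abs
                (ae_of_all _ fun x => abs_nonneg _)
      · rw [integral_undef hint]
        simp
    -- Lp monotonicity
    have hstepB : ∀ ω : Ω,
        (∫⁻ x, ENNReal.ofReal |ξ x ω| ∂μ) ≤
          (∫⁻ x, (ENNReal.ofReal |ξ x ω|) ^ p ∂μ) ^ (1 / p) := by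
      intro ω
      have hsm : AEStronglyMeasurable (fun x => ξ x ω) μ :=
        (hmeas.comp (measurable_prodMk_right)).aestronglyMeasurable
      have h1 : eLpNorm (fun x => ξ x ω) 1 μ ≤
          eLpNorm (fun x => ξ x ω) (ENNReal.ofReal p) μ := by
        apply eLpNorm_le_eLpNorm_of_exponent_le _ hsm
        rw [show (1 : ℝ≥0∞) = ENNReal.ofReal 1 by simp]
        exact ENNReal.ofReal_le_ofReal hp1.le
      rw [eLpNorm_one_eq_lintegral_enorm,
        eLpNorm_eq_lintegral_rpow_enorm_toReal
          (by simp [ENNReal.ofReal_eq_zero]; linarith) (by simp),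
        ENNReal.toReal_ofReal hp0.le] at h1
      simpa [Real.enorm_eq_ofReal_abs, Real.norm_eq_abs, one_div] using h1
    have hstepAB : ∀ ω : Ω,
        (ENNReal.ofReal |∫ x, ξ x ω ∂μ|) ^ p ≤
          ∫⁻ x, (ENNReal.ofReal |ξ x ω|) ^ p ∂μ := by
      intro ω
      calc (ENNReal.ofReal |∫ x, ξ x ω ∂μ|) ^ p
          ≤ ((∫⁻ x, (ENNReal.ofReal |ξ x ω|) ^ p ∂μ) ^ (1 / p)) ^ p :=
            ENNReal.rpow_le_rpow ((hstepA ω).trans (hstepB ω)) hp0.le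
        _ = ∫⁻ x, (ENNReal.ofReal |ξ x ω|) ^ p ∂μ := by
            rw [← ENNReal.rpow_mul, one_div, inv_mul_cancel₀ hp0.ne', ENNReal.rpow_one]
    -- Markov
    have hfmeas : Measurable fun ω => ∫ x, ξ x ω ∂μ := by
      have : StronglyMeasurable (Function.uncurry ξ) := hmeas.stronglyMeasurable
      exact this.integral_prod_left.measurable
    have hFmeas : Measurable fun ω => (ENNReal.ofReal |∫ x, ξ x ω ∂μ|) ^ p :=
      ((ENNReal.measurable_ofReal.comp hfmeas.abs).pow_const _)
    have hmarkov : ENNReal.ofReal (t ^ p) * P A ≤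
        ∫⁻ ω, (ENNReal.ofReal |∫ x, ξ x ω ∂μ|) ^ p ∂P := by
      have hsub : P A ≤
          P {ω | ENNReal.ofReal (t ^ p) ≤ (ENNReal.ofReal |∫ x, ξ x ω ∂μ|) ^ p} := by
        apply measure_mono
        intro ω hω
        have h1 : t ^ p ≤ |∫ x, ξ x ω ∂μ| ^ p :=
          Real.rpow_le_rpow ht0.le hω hp0.le
        calc ENNReal.ofReal (t ^ p) ≤ ENNReal.ofReal (|∫ x, ξ x ω ∂μ| ^ p) :=
              ENNReal.ofReal_le_ofReal h1
          _ = (ENNReal.ofReal |∫ x, ξ x ω ∂μ|) ^ p :=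
              (ENNReal.ofReal_rpow_of_nonneg (abs_nonneg _) hp0.le).symm
      calc ENNReal.ofReal (t ^ p) * P A
          ≤ ENNReal.ofReal (t ^ p) *
            P {ω | ENNReal.ofReal (t ^ p) ≤ (ENNReal.ofReal |∫ x, ξ x ω ∂μ|) ^ p} :=
            mul_le_mul_right hsub _
        _ ≤ ∫⁻ ω, (ENNReal.ofReal |∫ x, ξ x ω ∂μ|) ^ p ∂P :=
            mul_meas_ge_le_lintegral₀ hFmeas.aemeasurable _
    -- Fubini + layer cake
    have hswap :
        ∫⁻ ω, (∫⁻ x, (ENNReal.ofReal |ξ x ω|) ^ p ∂μ) ∂P =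
          ∫⁻ x, (∫⁻ ω, (ENNReal.ofReal |ξ x ω|) ^ p ∂P) ∂μ := by
      apply lintegral_lintegral_swap
      apply AEMeasurable.pow_const
      apply Measurable.aemeasurable
      exact ENNReal.measurable_ofReal.comp
        ((hmeas.comp measurable_swap).abs)
    have hlayer : ∀ x : X,
        (∫⁻ ω, (ENNReal.ofReal |ξ x ω|) ^ p ∂P) ≤ C := by
      intro x
      have hmx : Measurable fun ω => ξ x ω := hmeas.comp measurable_prodMk_left
      have heq : ∫⁻ ω, (ENNReal.ofReal |ξ x ω|) ^ p ∂P =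
          ENNReal.ofReal p *
            ∫⁻ s in Set.Ioi (0 : ℝ), P {a | s ≤ |ξ x a|} * ENNReal.ofReal (s ^ (p - 1)) := by
        rw [← lintegral_rpow_eq_lintegral_meas_le_mul P
          (ae_of_all _ fun ω => abs_nonneg (ξ x ω)) hmx.abs.aemeasurable hp0]
        congr 1 with ω
        exact ENNReal.ofReal_rpow_of_nonneg (abs_nonneg _) hp0.le
      rw [heq, hC]
      apply mul_le_mul_right
      apply lintegral_mono
      intro s
      dsimp only
      rw [mul_comm]
      apply mul_le_mul_right
      rw [hQ s]
      exact le_iSup (fun x => P {ω | s ≤ |ξ x ω|}) x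
    have hmain : ENNReal.ofReal (t ^ p) * P A ≤ C := by
      calc ENNReal.ofReal (t ^ p) * P A
          ≤ ∫⁻ ω, (ENNReal.ofReal |∫ x, ξ x ω ∂μ|) ^ p ∂P := hmarkov
        _ ≤ ∫⁻ ω, (∫⁻ x, (ENNReal.ofReal |ξ x ω|) ^ p ∂μ) ∂P :=
            lintegral_mono fun ω => hstepAB ω
        _ = ∫⁻ x, (∫⁻ ω, (ENNReal.ofReal |ξ x ω|) ^ p ∂P) ∂μ := hswap
        _ ≤ ∫⁻ _, C ∂μ := lintegral_mono fun x => hlayer x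
        _ = C := by simp
    -- identify C with (g₀ p)^p and finish
    have hCg : C = (g₀ p) ^ p := by
      rw [hg₀ p, ← ENNReal.rpow_mul, one_div, inv_mul_cancel₀ hp0.ne', ENNReal.rpow_one]
    have hg₀fin : g₀ p < ⊤ := hfin p hp1 hpb
    set r : ℝ := (g₀ p).toReal with hr
    have hrg : g₀ p = ENNReal.ofReal r := (ENNReal.ofReal_toReal hg₀fin.ne).symm
    have hCr : C = ENNReal.ofReal (r ^ p) := by
      rw [hCg, hrg, ENNReal.ofReal_rpow_of_nonneg ENNReal.toReal_nonneg hp0.le]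
    have htp0 : (0 : ℝ) < t ^ p := Real.rpow_pos_of_pos ht0 p
    have hPAle : P A ≤ ENNReal.ofReal (r ^ p / t ^ p) := by
      rw [ENNReal.ofReal_div_of_pos htp0]
      rw [ENNReal.le_div_iff_mul_le
        (Or.inl (by simp [ENNReal.ofReal_eq_zero]; linarith))
        (Or.inl ENNReal.ofReal_ne_top)]
      rw [mul_comm, ← hCr]
      exact hmain
    refine hPAle.trans (ENNReal.ofReal_le_ofReal ?_)
    -- real inequality
    have hexp : Real.exp (-(p * Real.log t - g p)) =
        Real.exp (g p) / t ^ p := by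
      rw [show -(p * Real.log t - g p) = g p + -(p * Real.log t) by ring,
        Real.exp_add, Real.exp_neg]
      rw [show t ^ p = Real.exp (Real.log t * p) from Real.rpow_def_of_pos ht0 p]
      ring_nf
    rw [hexp]
    gcongr
    rcases eq_or_lt_of_le (show (0:ℝ) ≤ r from ENNReal.toReal_nonneg) with h0 | h0
    · rw [← h0, Real.zero_rpow hp0.ne']
      exact (Real.exp_pos _).le
    · rw [hg p, ← hr, show p * Real.log r = Real.log r * p by ring,
        ← Real.rpow_def_of_pos h0]
  -- assemble over the supremum
  have hSne : S.Nonempty := by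
    obtain ⟨q, hq0, hq1, hq2⟩ := (ENNReal.lt_iff_exists_real_btwn).mp hb
    exact ⟨q * Real.log t - g q, q, ENNReal.one_lt_ofReal.mp hq1, hq2, rfl⟩
  by_cases hbdd : BddAbove S
  · by_cases hPA : P A = 0
    · rw [hPA]; exact zero_le
    · have hfinPA : P A ≠ ⊤ := measure_ne_top P A
      set c : ℝ := (P A).toReal with hc
      have hc0 : 0 < c := ENNReal.toReal_pos hPA hfinPA
      have hy : ∀ y ∈ S, y ≤ -Real.log c := by
        rintro y ⟨p, hp1, hpb, rfl⟩
        have h1 := key p hp1 hpb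
        have h2 : c ≤ Real.exp (-(p * Real.log t - g p)) :=
          ENNReal.toReal_le_of_le_ofReal (Real.exp_pos _).le h1
        have h3 : Real.log c ≤ -(p * Real.log t - g p) := by
          calc Real.log c ≤ Real.log (Real.exp (-(p * Real.log t - g p))) :=
                Real.log_le_log hc0 h2
            _ = -(p * Real.log t - g p) := Real.log_exp _
        linarith
      have hsup : sSup S ≤ -Real.log c := csSup_le hSne hy
      have hcle : c ≤ Real.exp (-sSup S) := by
        calc c = Real.exp (Real.log c) := (Real.exp_log hc0).symm
          _ ≤ Real.exp (-sSup S) := Real.exp_le_exp.mpr (by linarith)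
      calc P A = ENNReal.ofReal c := (ENNReal.ofReal_toReal hfinPA).symm
        _ ≤ ENNReal.ofReal (Real.exp (-sSup S)) := ENNReal.ofReal_le_ofReal hcle
  · rw [Real.sSup_of_not_bddAbove hbdd, neg_zero, Real.exp_zero, ENNReal.ofReal_one]
    exact prob_le_one
end

section
/- (Proposition 3.1.) Let η be an integrable real random variable on (Ω, B, P) and F a sub-σ-algebra of B; set ν = E[η | F]. Suppose P(|η| ≥ t) ≤ R(t) for all t ≥ 0, where R is non-negative, bounded by 1, non-increasing, measurable with R(t) → 0 as t → ∞, and define δ(p) = (p ∫₀^∞ t^{p−1} R(t) dt)^{1/p}, assumed finite for p ∈ (1, b) for some b ∈ (1, ∞]. Then ‖ν‖_{L^p(P)} ≤ δ(p) for every p ∈ (1, b) (i.e. ‖ν‖Gδ ≤ 1), and consequently P(|ν| ≥ t) ≤ exp(−v*(ln t)) for all t ≥ e, where v(p) = p ln δ(p) and v*(u) = sup_{p∈(1,b)}(pu − v(p)). -/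
open MeasureTheory Real ENNReal

/-- Lᵖ-type contraction for the conditional expectation of a nonnegative function,
at the level of `lintegral` of `p`-th powers. -/
lemma lintegral_condexp_rpow_le {Ω : Type*} [mΩ : MeasurableSpace Ω] (P : Measure Ω)
    [IsProbabilityMeasure P] (F : MeasurableSpace Ω) (hF : F ≤ mΩ)
    (g : Ω → ℝ) (hg : Integrable g P) (hg0 : ∀ ω, 0 ≤ g ω)
    {p : ℝ} (hp : 1 < p) :
    ∫⁻ ω, ENNReal.ofReal ((P[g|F]) ω) ^ p ∂P ≤ ∫⁻ ω, ENNReal.ofReal (g ω) ^ p ∂P := by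
  haveI : IsFiniteMeasure (P.trim hF) := isFiniteMeasure_trim hF
  set ξ : Ω → ℝ := P[g|F] with hξdef
  have hp0 : (0:ℝ) < p := lt_trans one_pos hp
  have hp1 : (0:ℝ) ≤ p - 1 := by linarith
  set q : ℝ := Real.conjExponent p with hqdef
  have hpq : p.HolderConjugate q := Real.HolderConjugate.conjExponent hp
  have hξm : StronglyMeasurable[F] ξ := stronglyMeasurable_condExp
  have hξmeas : Measurable[F] ξ := hξm.measurable
  have hξsm : AEStronglyMeasurable[mΩ] ξ P := (hξm.mono hF).aestronglyMeasurable
  have hξ0 : 0 ≤ᵐ[P] ξ := condExp_nonneg (Filter.Eventually.of_forall hg0)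
  have hξint : Integrable ξ P := integrable_condExp
  set I : ℝ≥0∞ := ∫⁻ ω, ENNReal.ofReal (g ω) ^ p ∂P with hIdef
  -- the truncations
  set ζ : ℕ → Ω → ℝ := fun n ω => min (max (ξ ω) 0) (n : ℝ) with hζdef
  have hζ0 : ∀ n ω, 0 ≤ ζ n ω := fun n ω => le_min (le_max_right _ _) (Nat.cast_nonneg n)
  have hζle : ∀ n ω, ζ n ω ≤ (n : ℝ) := fun n ω => min_le_right _ _
  have hζmF : ∀ n, Measurable[F] (ζ n) :=
    fun n => (hξmeas.max measurable_const).min measurable_const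
  have hζmeas : ∀ n, Measurable[mΩ] (ζ n) := fun n => (hζmF n).mono hF le_rfl
  have hrpow_meas : Measurable fun x : ℝ => x ^ (p - 1) :=
    (Real.continuous_rpow_const hp1).measurable
  have key : ∀ n : ℕ, ∫⁻ ω, ENNReal.ofReal (ζ n ω) ^ p ∂P ≤ I := by
    intro n
    set φ : Ω → ℝ := fun ω => ζ n ω ^ (p - 1) with hφdef
    have hφmF : StronglyMeasurable[F] φ :=
      Measurable.stronglyMeasurable (hrpow_meas.comp (hζmF n))
    have hφmeas : Measurable[mΩ] φ := hrpow_meas.comp (hζmeas n)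
    have hφ0 : ∀ ω, 0 ≤ φ ω := fun ω => Real.rpow_nonneg (hζ0 n ω) _
    have hφbd : ∀ᵐ ω ∂P, ‖φ ω‖ ≤ (n : ℝ) ^ (p - 1) := by
      refine Filter.Eventually.of_forall fun ω => ?_
      rw [Real.norm_of_nonneg (hφ0 ω)]
      exact Real.rpow_le_rpow (hζ0 n ω) (hζle n ω) hp1
    have hpull : P[φ * g|F] =ᵐ[P] φ * ξ :=
      condExp_stronglyMeasurable_mul_of_bound hF hφmF hg _ hφbd
    have hφg_int : Integrable (fun ω => φ ω * g ω) P :=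
      hg.bdd_mul (hφmF.mono hF).aestronglyMeasurable hφbd
    have hφξ_int : Integrable (fun ω => φ ω * max (ξ ω) 0) P :=
      hξint.pos_part.bdd_mul (hφmF.mono hF).aestronglyMeasurable hφbd
    have hint_eq : ∫ ω, φ ω * ξ ω ∂P = ∫ ω, φ ω * g ω ∂P := by
      calc ∫ ω, φ ω * ξ ω ∂P = ∫ ω, (P[φ * g|F]) ω ∂P :=
            (integral_congr_ae hpull).symm
        _ = ∫ ω, (φ * g) ω ∂P := integral_condExp hF
        _ = ∫ ω, φ ω * g ω ∂P := rfl
    set Bn : ℝ≥0∞ := ∫⁻ ω, ENNReal.ofReal (ζ n ω) ^ p ∂P with hBndef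
    have hBn_le : Bn ≤ Bn ^ (1/q) * I ^ (1/p) := by
      have step1 : Bn = ∫⁻ ω, ENNReal.ofReal (φ ω) * ENNReal.ofReal (ζ n ω) ∂P := by
        refine lintegral_congr fun ω => ?_
        calc ENNReal.ofReal (ζ n ω) ^ p
            = ENNReal.ofReal (ζ n ω) ^ ((p - 1) + 1) := by norm_num
          _ = ENNReal.ofReal (ζ n ω) ^ (p - 1) * ENNReal.ofReal (ζ n ω) ^ (1:ℝ) :=
              ENNReal.rpow_add_of_nonneg _ _ hp1 zero_le_one
          _ = ENNReal.ofReal (φ ω) * ENNReal.ofReal (ζ n ω) := by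
              rw [ENNReal.rpow_one, ENNReal.ofReal_rpow_of_nonneg (hζ0 n ω) hp1]
      have step2 : ∫⁻ ω, ENNReal.ofReal (φ ω) * ENNReal.ofReal (ζ n ω) ∂P
          ≤ ∫⁻ ω, ENNReal.ofReal (φ ω * max (ξ ω) 0) ∂P := by
        refine lintegral_mono fun ω => ?_
        rw [ENNReal.ofReal_mul (hφ0 ω)]
        exact mul_le_mul_right (ENNReal.ofReal_le_ofReal (min_le_left _ _)) _
      have step3 : ∫⁻ ω, ENNReal.ofReal (φ ω * max (ξ ω) 0) ∂P
          = ENNReal.ofReal (∫ ω, φ ω * g ω ∂P) := by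
        rw [← MeasureTheory.ofReal_integral_eq_lintegral_ofReal hφξ_int
          (Filter.Eventually.of_forall fun ω => mul_nonneg (hφ0 ω) (le_max_right _ _))]
        congr 1
        rw [← hint_eq]
        refine integral_congr_ae ?_
        filter_upwards [hξ0] with ω hω
        rw [show max (ξ ω) 0 = ξ ω from max_eq_left hω]
      have step4 : ENNReal.ofReal (∫ ω, φ ω * g ω ∂P)
          = ∫⁻ ω, ENNReal.ofReal (φ ω) * ENNReal.ofReal (g ω) ∂P := by
        rw [MeasureTheory.ofReal_integral_eq_lintegral_ofReal hφg_int
          (Filter.Eventually.of_forall fun ω => mul_nonneg (hφ0 ω) (hg0 ω))]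
        exact lintegral_congr fun ω => ENNReal.ofReal_mul (hφ0 ω)
      have step5 : ∫⁻ ω, ENNReal.ofReal (φ ω) * ENNReal.ofReal (g ω) ∂P
          ≤ Bn ^ (1/q) * I ^ (1/p) := by
        have hφaem : AEMeasurable (fun ω => ENNReal.ofReal (φ ω)) P :=
          Measurable.aemeasurable (μ := P) (hφmeas.ennreal_ofReal)
        have hgaem : AEMeasurable (fun ω => ENNReal.ofReal (g ω)) P := by
          exact ENNReal.measurable_ofReal.comp_aemeasurable hg.aestronglyMeasurable.aemeasurable
        have hH := @ENNReal.lintegral_mul_le_Lp_mul_Lq Ω mΩ P q p hpq.symm _ _ hφaem hgaem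
        have hfq : ∀ ω, ENNReal.ofReal (φ ω) ^ q = ENNReal.ofReal (ζ n ω) ^ p := by
          intro ω
          calc ENNReal.ofReal (φ ω) ^ q
              = (ENNReal.ofReal (ζ n ω) ^ (p - 1)) ^ q := by
                rw [ENNReal.ofReal_rpow_of_nonneg (hζ0 n ω) hp1]
            _ = ENNReal.ofReal (ζ n ω) ^ ((p - 1) * q) := by rw [← ENNReal.rpow_mul]
            _ = ENNReal.ofReal (ζ n ω) ^ p := by rw [hpq.sub_one_mul_conj]
        calc ∫⁻ ω, ENNReal.ofReal (φ ω) * ENNReal.ofReal (g ω) ∂P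
            = ∫⁻ ω, ((fun ω => ENNReal.ofReal (φ ω)) * fun ω => ENNReal.ofReal (g ω)) ω ∂P := rfl
          _ ≤ (∫⁻ ω, ENNReal.ofReal (φ ω) ^ q ∂P) ^ (1/q) *
                (∫⁻ ω, ENNReal.ofReal (g ω) ^ p ∂P) ^ (1/p) := hH
          _ = Bn ^ (1/q) * I ^ (1/p) := by
              rw [hBndef, hIdef]
              congr 2
              exact lintegral_congr hfq
      calc Bn = _ := step1
        _ ≤ _ := step2
        _ = _ := step3
        _ = _ := step4
        _ ≤ _ := step5
    -- deduce `Bn ≤ I`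
    by_cases hB0 : Bn = 0
    · exact hB0 ▸ zero_le (a := I)
    have hq_pos : 0 < q := hpq.symm.pos
    have hBfin : Bn ≠ ⊤ := by
      have hb : Bn ≤ ∫⁻ _ω, ENNReal.ofReal (n : ℝ) ^ p ∂P := by
        refine lintegral_mono fun ω => ?_
        exact ENNReal.rpow_le_rpow (ENNReal.ofReal_le_ofReal (hζle n ω)) hp0.le
      rw [lintegral_const, measure_univ, mul_one] at hb
      exact ne_top_of_le_ne_top (ENNReal.rpow_ne_top_of_nonneg hp0.le ENNReal.ofReal_ne_top) hb
    have h1 : 1/q + 1/p = 1 := by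
      have := hpq.inv_add_inv_eq_one
      rw [one_div, one_div]
      linarith
    have hsplit : Bn = Bn ^ (1/q) * Bn ^ (1/p) := by
      rw [← ENNReal.rpow_add_of_nonneg _ _ (one_div_nonneg.2 hq_pos.le) (one_div_nonneg.2 hp0.le),
        h1, ENNReal.rpow_one]
    have hq0 : Bn ^ (1/q) ≠ 0 := (ENNReal.rpow_pos (pos_iff_ne_zero.2 hB0) hBfin).ne'
    have hqt : Bn ^ (1/q) ≠ ⊤ := ENNReal.rpow_ne_top_of_nonneg (one_div_nonneg.2 hq_pos.le) hBfin
    have hBn_le2 : Bn ^ (1/q) * Bn ^ (1/p) ≤ Bn ^ (1/q) * I ^ (1/p) :=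
      le_trans (le_of_eq hsplit.symm) hBn_le
    have hle : Bn ^ (1/p) ≤ I ^ (1/p) := (ENNReal.mul_le_mul_iff_right hq0 hqt).mp hBn_le2
    have hfin := ENNReal.rpow_le_rpow hle hp0.le
    rwa [← ENNReal.rpow_mul, ← ENNReal.rpow_mul, one_div,
      inv_mul_cancel₀ hp0.ne', ENNReal.rpow_one, ENNReal.rpow_one] at hfin
  -- monotone convergence
  have hmeq : ∀ n, (∫⁻ ω, ENNReal.ofReal (ζ n ω) ^ p ∂P)
      = ∫⁻ ω, ENNReal.ofReal (ζ n ω ^ p) ∂P :=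
    fun n => lintegral_congr fun ω => ENNReal.ofReal_rpow_of_nonneg (hζ0 n ω) hp0.le
  have hζmono : ∀ ω, Monotone fun n : ℕ => ζ n ω := by
    intro ω n m hnm
    exact min_le_min le_rfl (Nat.cast_le.2 hnm)
  have hfmeas : ∀ n, AEMeasurable (fun ω => ENNReal.ofReal (ζ n ω ^ p)) P := by
    intro n
    exact (((Real.continuous_rpow_const hp0.le).measurable.comp (hζmeas n)).ennreal_ofReal).aemeasurable
  have hmono : ∀ᵐ ω ∂P, Monotone fun n : ℕ => ENNReal.ofReal (ζ n ω ^ p) := by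
    refine Filter.Eventually.of_forall fun ω n m hnm => ?_
    exact ENNReal.ofReal_le_ofReal (Real.rpow_le_rpow (hζ0 n ω) (hζmono ω hnm) hp0.le)
  have hsup : ∀ ω, 0 ≤ ξ ω →
      ENNReal.ofReal (ξ ω) ^ p = ⨆ n : ℕ, ENNReal.ofReal (ζ n ω ^ p) := by
    intro ω hω
    have hmax : max (ξ ω) 0 = ξ ω := max_eq_left hω
    apply le_antisymm
    · refine le_iSup_of_le (Nat.ceil (ξ ω)) (le_of_eq ?_)
      have hζeq : ζ (Nat.ceil (ξ ω)) ω = ξ ω := by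
        show min (max (ξ ω) 0) ((Nat.ceil (ξ ω) : ℕ) : ℝ) = ξ ω
        rw [hmax, min_eq_left (Nat.le_ceil _)]
      rw [hζeq, ENNReal.ofReal_rpow_of_nonneg hω hp0.le]
    · refine iSup_le fun n => ?_
      rw [← ENNReal.ofReal_rpow_of_nonneg (hζ0 n ω) hp0.le]
      refine ENNReal.rpow_le_rpow (ENNReal.ofReal_le_ofReal ?_) hp0.le
      exact le_trans (min_le_left _ _) (le_of_eq hmax)
  calc ∫⁻ ω, ENNReal.ofReal (ξ ω) ^ p ∂P
      = ∫⁻ ω, ⨆ n : ℕ, ENNReal.ofReal (ζ n ω ^ p) ∂P := by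
        refine lintegral_congr_ae ?_
        filter_upwards [hξ0] with ω hω
        exact hsup ω hω
    _ = ⨆ n, ∫⁻ ω, ENNReal.ofReal (ζ n ω ^ p) ∂P := lintegral_iSup' hfmeas hmono
    _ ≤ I := iSup_le fun n => le_trans (le_of_eq (hmeq n).symm) (key n)



/-- Lᵖ contraction for conditional expectation. -/
lemma eLpNorm_condexp_le_aux {Ω : Type*} [mΩ : MeasurableSpace Ω] (P : Measure Ω)
    [IsProbabilityMeasure P] (F : MeasurableSpace Ω) (hF : F ≤ mΩ)
    (η : Ω → ℝ) (hη : Integrable η P) {p : ℝ} (hp : 1 < p) :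
    eLpNorm (P[η|F]) (ENNReal.ofReal p) P ≤ eLpNorm η (ENNReal.ofReal p) P := by
  haveI : IsFiniteMeasure (P.trim hF) := isFiniteMeasure_trim hF
  set ν : Ω → ℝ := P[η|F] with hνdef
  set ξ : Ω → ℝ := P[(fun ω => |η ω|)|F] with hξdef
  have hp0 : (0:ℝ) < p := lt_trans one_pos hp
  have habs_int : Integrable (fun ω => |η ω|) P := hη.abs
  have h1 : ν ≤ᵐ[P] ξ :=
    condExp_mono hη habs_int (Filter.Eventually.of_forall fun ω => le_abs_self _)
  have h2 : -ν ≤ᵐ[P] ξ := by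
    have hneg : P[-η|F] =ᵐ[P] -ν := condExp_neg η F
    have hmono : P[-η|F] ≤ᵐ[P] ξ :=
      condExp_mono hη.neg habs_int (Filter.Eventually.of_forall fun ω => (by simpa using neg_le_abs (η ω) : (-η) ω ≤ |η ω|))
    exact hneg.symm.trans_le hmono
  have habs : ∀ᵐ ω ∂P, |ν ω| ≤ ξ ω := by
    filter_upwards [h1, h2] with ω hω1 hω2
    simp only [Pi.neg_apply] at hω2
    exact abs_le.2 ⟨by linarith, hω1⟩
  have hp_ne0 : ENNReal.ofReal p ≠ 0 := by
    simp only [ne_eq, ENNReal.ofReal_eq_zero, not_le]; exact hp0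
  have htoReal : (ENNReal.ofReal p).toReal = p := ENNReal.toReal_ofReal hp0.le
  rw [eLpNorm_eq_lintegral_rpow_enorm_toReal hp_ne0 ENNReal.ofReal_ne_top,
    eLpNorm_eq_lintegral_rpow_enorm_toReal hp_ne0 ENNReal.ofReal_ne_top, htoReal]
  refine ENNReal.rpow_le_rpow ?_ (one_div_nonneg.2 hp0.le)
  calc ∫⁻ ω, ‖ν ω‖ₑ ^ p ∂P
      ≤ ∫⁻ ω, ENNReal.ofReal (ξ ω) ^ p ∂P := by
        refine lintegral_mono_ae ?_
        filter_upwards [habs] with ω hω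
        rw [Real.enorm_eq_ofReal_abs]
        exact ENNReal.rpow_le_rpow (ENNReal.ofReal_le_ofReal hω) hp0.le
    _ ≤ ∫⁻ ω, ENNReal.ofReal (|η ω|) ^ p ∂P :=
        lintegral_condexp_rpow_le (mΩ := mΩ) P F hF _ habs_int (fun ω => abs_nonneg _) hp
    _ = ∫⁻ ω, ‖η ω‖ₑ ^ p ∂P := by
        refine lintegral_congr fun ω => ?_
        rw [Real.enorm_eq_ofReal_abs]

/-- Proposition 3.1: let `η` be integrable with tail `P(|η| ≥ t) ≤ R(t)`, where `R`
is non-negative, bounded by 1, non-increasing and `R(t) → 0`, and let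
`δ(p) = (p ∫₀^∞ t^{p−1} R(t) dt)^{1/p}` be finite for `p ∈ (1,b)`, `b ∈ (1,∞]`.
Then the conditional expectation `ν = E[η|F]` satisfies `‖ν‖_{L^p(P)} ≤ δ(p)` for
every `p ∈ (1,b)` (i.e. `‖ν‖Gδ ≤ 1`), and consequently
`P(|ν| ≥ t) ≤ exp(−v*(ln t))` for `t ≥ e`, where `v(p) = p ln δ(p)` and
`v*(u) = sup_{p∈(1,b)}(pu − v(p))`. -/
theorem conditional_expectation_grand_lebesgue_estimate
    {Ω : Type*} [mΩ : MeasurableSpace Ω] (P : Measure Ω) [IsProbabilityMeasure P]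
    (F : MeasurableSpace Ω) (hF : F ≤ mΩ)
    (η : Ω → ℝ) (hη : Integrable η P)
    (R : ℝ → ℝ)
    (hRmeas : Measurable R)
    (hRnonneg : ∀ t, 0 ≤ R t) (hRle : ∀ t, R t ≤ 1)
    (hRanti : Antitone R)
    (hRlim : Filter.Tendsto R Filter.atTop (nhds 0))
    (htail : ∀ t : ℝ, 0 ≤ t → P {ω | t ≤ |η ω|} ≤ ENNReal.ofReal (R t))
    (δ : ℝ → ℝ≥0∞)
    (hδ : ∀ p : ℝ, δ p =
      (ENNReal.ofReal p *
        ∫⁻ t in Set.Ioi (0 : ℝ), ENNReal.ofReal (t ^ (p - 1) * R t)) ^ (1 / p))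
    (b : ℝ≥0∞) (hb : 1 < b)
    (hfin : ∀ p : ℝ, 1 < p → ENNReal.ofReal p < b → δ p < ⊤) :
    (∀ p : ℝ, 1 < p → ENNReal.ofReal p < b →
      eLpNorm (P[η|F]) (ENNReal.ofReal p) P ≤ δ p) ∧
    (∀ t : ℝ, Real.exp 1 ≤ t →
      P {ω | t ≤ |(P[η|F]) ω|} ≤ ENNReal.ofReal
        (Real.exp
          (- sSup {y : ℝ | ∃ p : ℝ, 1 < p ∧ ENNReal.ofReal p < b ∧
              y = p * Real.log t - p * Real.log (δ p).toReal}))) := by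
  haveI : IsFiniteMeasure (P.trim hF) := isFiniteMeasure_trim hF
  have part1 : ∀ p : ℝ, 1 < p → ENNReal.ofReal p < b →
      eLpNorm (P[η|F]) (ENNReal.ofReal p) P ≤ δ p := by
    intro p hp1 hpb
    have hp0 : (0:ℝ) < p := lt_trans one_pos hp1
    have hp_ne0 : ENNReal.ofReal p ≠ 0 := by
      simp only [ne_eq, ENNReal.ofReal_eq_zero, not_le]; exact hp0
    have habs_ae : AEMeasurable (fun ω => |η ω|) P :=
      Measurable.comp_aemeasurable (μ := P) continuous_abs.measurable
        hη.aestronglyMeasurable.aemeasurable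
    have hlc := @MeasureTheory.lintegral_rpow_eq_lintegral_meas_le_mul Ω mΩ P
      (fun ω => |η ω|) (Filter.Eventually.of_forall fun ω => abs_nonneg _) habs_ae p hp0
    have hbound : (∫⁻ s in Set.Ioi (0:ℝ), P {a | s ≤ |η a|} * ENNReal.ofReal (s ^ (p-1)))
        ≤ ∫⁻ s in Set.Ioi (0:ℝ), ENNReal.ofReal (s ^ (p-1) * R s) := by
      refine setLIntegral_mono (((Real.continuous_rpow_const (by linarith)).measurable.mul
        hRmeas).ennreal_ofReal) fun s hs => ?_
      have hs0 : (0:ℝ) < s := hs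
      calc P {a | s ≤ |η a|} * ENNReal.ofReal (s ^ (p-1))
          ≤ ENNReal.ofReal (R s) * ENNReal.ofReal (s ^ (p-1)) :=
            mul_le_mul_left (htail s hs0.le) _
        _ = ENNReal.ofReal (s ^ (p-1) * R s) := by
            rw [mul_comm, ← ENNReal.ofReal_mul (Real.rpow_nonneg hs0.le _)]
    have hnorm : eLpNorm η (ENNReal.ofReal p) P ≤ δ p := by
      rw [eLpNorm_eq_lintegral_rpow_enorm_toReal hp_ne0 ENNReal.ofReal_ne_top,
        ENNReal.toReal_ofReal hp0.le, hδ p]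
      refine ENNReal.rpow_le_rpow ?_ (one_div_nonneg.2 hp0.le)
      calc ∫⁻ ω, ‖η ω‖ₑ ^ p ∂P
          = ∫⁻ ω, ENNReal.ofReal (|η ω| ^ p) ∂P := by
            refine lintegral_congr fun ω => ?_
            rw [Real.enorm_eq_ofReal_abs, ENNReal.ofReal_rpow_of_nonneg (abs_nonneg _) hp0.le]
        _ = ENNReal.ofReal p *
              ∫⁻ s in Set.Ioi (0:ℝ), P {a | s ≤ |η a|} * ENNReal.ofReal (s ^ (p-1)) := hlc
        _ ≤ ENNReal.ofReal p * ∫⁻ s in Set.Ioi (0:ℝ), ENNReal.ofReal (s ^ (p-1) * R s) :=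
            mul_le_mul_right hbound _
    exact le_trans (eLpNorm_condexp_le_aux (mΩ := mΩ) P F hF η hη hp1) hnorm
  refine ⟨part1, ?_⟩
  intro t ht
  have hexp1 : (1:ℝ) < Real.exp 1 := by
    calc (1:ℝ) = Real.exp 0 := Real.exp_zero.symm
      _ < Real.exp 1 := Real.exp_lt_exp.2 one_pos
  have ht0 : (0:ℝ) < t := lt_of_lt_of_le (Real.exp_pos 1) ht
  set ν : Ω → ℝ := P[η|F] with hνdef
  set S : Set ℝ := {y : ℝ | ∃ p : ℝ, 1 < p ∧ ENNReal.ofReal p < b ∧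
      y = p * Real.log t - p * Real.log (δ p).toReal} with hSdef
  set A : Set Ω := {ω | t ≤ |ν ω|} with hAdef
  have hSne : S.Nonempty := by
    obtain ⟨c, hc1, hcb⟩ := exists_between hb
    have hcne : c ≠ ⊤ := hcb.ne_top
    refine ⟨c.toReal * Real.log t - c.toReal * Real.log (δ c.toReal).toReal, c.toReal, ?_, ?_, rfl⟩
    · have h := ENNReal.toReal_strict_mono hcne hc1
      simpa using h
    · rwa [ENNReal.ofReal_toReal hcne]
  have hbound : ∀ y ∈ S, P A ≤ ENNReal.ofReal (Real.exp (-y)) := by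
    rintro y ⟨p, hp1, hpb, rfl⟩
    have hp0 : (0:ℝ) < p := lt_trans one_pos hp1
    have hp_ne0 : ENNReal.ofReal p ≠ 0 := by
      simp only [ne_eq, ENNReal.ofReal_eq_zero, not_le]; exact hp0
    have hεne : (ENNReal.ofReal t) ≠ 0 := (ENNReal.ofReal_pos.2 ht0).ne'
    have hνsm : AEStronglyMeasurable[mΩ] ν P :=
      (stronglyMeasurable_condExp.mono hF).aestronglyMeasurable
    have hcheb := meas_ge_le_mul_pow_eLpNorm_enorm (μ := P) (p := ENNReal.ofReal p) (f := ν)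
      hp_ne0 ENNReal.ofReal_ne_top hνsm hεne (by simp)
    rw [ENNReal.toReal_ofReal hp0.le] at hcheb
    have hset : A = {x | ENNReal.ofReal t ≤ ‖ν x‖ₑ} := by
      ext ω
      simp only [hAdef, Set.mem_setOf_eq, Real.enorm_eq_ofReal_abs]
      exact (ENNReal.ofReal_le_ofReal_iff (abs_nonneg _)).symm
    rw [hset]
    refine le_trans hcheb ?_
    calc (ENNReal.ofReal t)⁻¹ ^ p * eLpNorm ν (ENNReal.ofReal p) P ^ p
        ≤ (ENNReal.ofReal t)⁻¹ ^ p * (δ p) ^ p :=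
          mul_le_mul_right (ENNReal.rpow_le_rpow (part1 p hp1 hpb) hp0.le) _
      _ ≤ ENNReal.ofReal (Real.exp (-(p * Real.log t - p * Real.log (δ p).toReal))) := by
          by_cases hδ0 : δ p = 0
          · rw [hδ0, ENNReal.zero_rpow_of_pos hp0, mul_zero]
            exact zero_le
          · have hδtop : δ p ≠ ⊤ := (hfin p hp1 hpb).ne
            have hd0 : 0 < (δ p).toReal := ENNReal.toReal_pos hδ0 hδtop
            have hδeq : δ p = ENNReal.ofReal ((δ p).toReal) := (ENNReal.ofReal_toReal hδtop).symm
            rw [hδeq, ← ENNReal.ofReal_inv_of_pos ht0,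
              ENNReal.ofReal_rpow_of_nonneg (inv_nonneg.2 ht0.le) hp0.le,
              ENNReal.ofReal_rpow_of_nonneg hd0.le hp0.le,
              ← ENNReal.ofReal_mul (Real.rpow_nonneg (inv_nonneg.2 ht0.le) p)]
            refine le_of_eq (congrArg _ ?_)
            rw [Real.rpow_def_of_pos (inv_pos.2 ht0) p, Real.rpow_def_of_pos hd0 p,
              Real.log_inv, ← Real.exp_add]
            congr 1
            rw [ENNReal.toReal_ofReal hd0.le]
            ring
  by_cases hbdd : BddAbove S
  · by_contra hcon
    push_neg at hcon
    have hAfin : P A ≠ ⊤ := measure_ne_top P A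
    have ha := (ENNReal.ofReal_lt_iff_lt_toReal (Real.exp_nonneg _) hAfin).mp hcon
    have ha0 : (0:ℝ) < (P A).toReal := lt_trans (Real.exp_pos _) ha
    have hlog : -Real.log ((P A).toReal) < sSup S := by
      have h := (Real.lt_log_iff_exp_lt ha0).2 ha
      linarith
    obtain ⟨y, hyS, hy⟩ := exists_lt_of_lt_csSup hSne hlog
    have h2 : (P A).toReal ≤ Real.exp (-y) :=
      ENNReal.toReal_le_of_le_ofReal (Real.exp_nonneg _) (hbound y hyS)
    have h3 : Real.exp (-y) < Real.exp (Real.log ((P A).toReal)) :=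
      Real.exp_lt_exp.2 (by linarith)
    rw [Real.exp_log ha0] at h3
    linarith
  · rw [Real.sSup_of_not_bddAbove hbdd]
    simp only [neg_zero, Real.exp_zero, ENNReal.ofReal_one]
    exact prob_le_one
end
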